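/- Let G be the simple graph on vertices a_1, a_2, a_3, x_1, x_2 with edges a_1–a_2, a_1–a_3, a_2–a_3, a_1–x_1, a_2–x_2, x_1–x_2. Then G has, up to semigroup isomorphism, a unique corresponding commutative zero-divisor semigroup, namely S = {0, a_1, a_2, a_3, x_1, x_2} with multiplication a_1² = a_2² = a_3² = 0, a_1a_2 = a_1a_3 = a_2a_3 = 0, a_1x_1 = 0, a_1x_2 = a_1, a_2x_1 = a_2, a_2x_2 = 0, a_3x_1 = a_2, a_3x_2 = a_1, x_1² = x_1, x_2² = x_2, x_1x_2 = 0; this multiplication is associative, Γ(S) ≅ G, and every commutative zero-divisor semigroup T with Γ(T) ≅ G is isomorphic to S. -/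

import Mathlib

/-- A commutative semigroup with a (left- and right-) absorbing zero element. -/
class CommSemigroupWithZero (S : Type*) extends CommSemigroup S, MulZeroClass S

/-- A zero-divisor semigroup: every element is annihilated by some nonzero element. -/
def IsZeroDivisorSemigroup (S : Type*) [CommSemigroupWithZero S] : Prop :=
  ∀ s : S, ∃ t : S, t ≠ 0 ∧ s * t = 0

/-- The zero-divisor graph Γ(S): vertices are the nonzero zero-divisors, distinct
vertices are adjacent iff their product is zero. -/
def zdGraph (S : Type*) [CommSemigroupWithZero S] :
    SimpleGraph {s : S // s ≠ 0 ∧ ∃ t : S, t ≠ 0 ∧ s * t = 0} where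
  Adj x y := x ≠ y ∧ (x : S) * y = 0
  symm := ⟨by
    rintro x y ⟨h1, h2⟩
    exact ⟨h1.symm, by rwa [mul_comm]⟩⟩
  loopless := ⟨fun x h => h.1 rfl⟩

/-- A six-element carrier {0, a₁, a₂, a₃, x₁, x₂}. -/
inductive S6 : Type
  | zero | a1 | a2 | a3 | x1 | x2
deriving DecidableEq

open S6

/-- The multiplication table of Corollary 2.4. -/
def mul13 : S6 → S6 → S6
  | zero, _ => zero
  | _, zero => zero
  | a1, a1 => zero
  | a1, a2 => zero
  | a2, a1 => zero
  | a1, a3 => zero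
  | a3, a1 => zero
  | a1, x1 => zero
  | x1, a1 => zero
  | a1, x2 => a1
  | x2, a1 => a1
  | a2, a2 => zero
  | a2, a3 => zero
  | a3, a2 => zero
  | a2, x1 => a2
  | x1, a2 => a2
  | a2, x2 => zero
  | x2, a2 => zero
  | a3, a3 => zero
  | a3, x1 => a2
  | x1, a3 => a2
  | a3, x2 => a1
  | x2, a3 => a1
  | x1, x1 => x1
  | x1, x2 => zero
  | x2, x1 => zero
  | x2, x2 => x2

/-- The graph G of Corollary 2.4: K₃ = {0,1,2} (= a₁,a₂,a₃) together with end
vertices 3 (= x₁, attached to a₁), 4 (= x₂, attached to a₂) and the edge x₁x₂. -/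
def G13 : SimpleGraph (Fin 5) :=
  SimpleGraph.fromRel (fun u v =>
    (u = 0 ∧ v = 1) ∨ (u = 0 ∧ v = 2) ∨ (u = 1 ∧ v = 2) ∨
    (u = 0 ∧ v = 3) ∨ (u = 1 ∧ v = 4) ∨ (u = 3 ∧ v = 4))


instance : Fintype S6 :=
  ⟨⟨{S6.zero, S6.a1, S6.a2, S6.a3, S6.x1, S6.x2}, by decide⟩, fun x => by cases x <;> decide⟩

theorem G13_uniq (T : Type) [CommSemigroupWithZero T] (hzd : IsZeroDivisorSemigroup T)
    (φ : zdGraph T ≃g G13) :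
    ∃ e : T ≃ S6, e 0 = zero ∧ ∀ s t : T, e (s * t) = mul13 (e s) (e t) := by
  classical
  set v : Fin 5 → T := fun i => ((φ.symm i : {s : T // s ≠ 0 ∧ ∃ t : T, t ≠ 0 ∧ s * t = 0}) : T) with hv
  have hne : ∀ i, v i ≠ 0 := fun i => (φ.symm i).2.1
  have hd : ∀ i j : Fin 5, i ≠ j → v i ≠ v j := by
    intro i j hij h
    exact hij (φ.symm.toEquiv.injective (Subtype.ext h))
  have hadj : ∀ i j : Fin 5, G13.Adj i j → v i * v j = 0 := by
    intro i j h
    exact (φ.symm.map_rel_iff.mpr h : φ.symm i ≠ φ.symm j ∧ v i * v j = 0).2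
  have hnadj : ∀ i j : Fin 5, i ≠ j → ¬ G13.Adj i j → v i * v j ≠ 0 := by
    intro i j hij h hm
    exact h (φ.symm.map_rel_iff.mp (⟨fun e => hij (φ.symm.toEquiv.injective e), hm⟩ : φ.symm i ≠ φ.symm j ∧ v i * v j = 0))
  have hexh : ∀ t : T, t = 0 ∨ t = v 0 ∨ t = v 1 ∨ t = v 2 ∨ t = v 3 ∨ t = v 4 := by
    intro t
    by_cases ht : t = 0
    · exact Or.inl ht
    · right
      have hw : v (φ ⟨t, ht, hzd t⟩) = t := by
        simp only [hv]
        rw [φ.symm_apply_apply]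
      set i := φ (⟨t, ht, hzd t⟩ : {s : T // s ≠ 0 ∧ ∃ t : T, t ≠ 0 ∧ s * t = 0}) with hi
      have h5 : i = 0 ∨ i = 1 ∨ i = 2 ∨ i = 3 ∨ i = 4 := by omega
      rcases h5 with h|h|h|h|h <;> rw [h] at hw <;> simp [hw.symm]
  -- adjacency products
  have h01 : v 0 * v 1 = 0 := hadj 0 1 (by simp [G13, SimpleGraph.fromRel_adj])
  have h02 : v 0 * v 2 = 0 := hadj 0 2 (by simp [G13, SimpleGraph.fromRel_adj])
  have h12 : v 1 * v 2 = 0 := hadj 1 2 (by simp [G13, SimpleGraph.fromRel_adj])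
  have h03 : v 0 * v 3 = 0 := hadj 0 3 (by simp [G13, SimpleGraph.fromRel_adj])
  have h14 : v 1 * v 4 = 0 := hadj 1 4 (by simp [G13, SimpleGraph.fromRel_adj])
  have h34 : v 3 * v 4 = 0 := hadj 3 4 (by simp [G13, SimpleGraph.fromRel_adj])
  have n04 : v 0 * v 4 ≠ 0 := hnadj 0 4 (by decide) (by simp [G13, SimpleGraph.fromRel_adj])
  have n13 : v 1 * v 3 ≠ 0 := hnadj 1 3 (by decide) (by simp [G13, SimpleGraph.fromRel_adj])
  have n23 : v 2 * v 3 ≠ 0 := hnadj 2 3 (by decide) (by simp [G13, SimpleGraph.fromRel_adj])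
  have n24 : v 2 * v 4 ≠ 0 := hnadj 2 4 (by decide) (by simp [G13, SimpleGraph.fromRel_adj])
  have assoc3 : ∀ a b c : T, (a * b) * c = (a * c) * b := fun a b c => by
    rw [mul_assoc, mul_comm b c, ← mul_assoc]
  -- p13 : v1 * v3 = v1
  have p13 : v 1 * v 3 = v 1 := by
    have z0 : (v 1 * v 3) * v 0 = 0 := by
      rw [assoc3, mul_comm (v 1) (v 0), h01, zero_mul]
    have z2 : (v 1 * v 3) * v 2 = 0 := by rw [assoc3, h12, zero_mul]
    have z4 : (v 1 * v 3) * v 4 = 0 := by rw [assoc3, h14, zero_mul]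
    rcases hexh (v 1 * v 3) with h|h|h|h|h|h
    · exact absurd h n13
    · rw [h] at z4; exact absurd z4 n04
    · exact h
    · rw [h] at z4; exact absurd z4 n24
    · rw [h, mul_comm] at z2; exact absurd z2 n23
    · rw [h, mul_comm] at z0; exact absurd z0 n04
  -- p04 : v0 * v4 = v0
  have p04 : v 0 * v 4 = v 0 := by
    have z1 : (v 0 * v 4) * v 1 = 0 := by rw [assoc3, h01, zero_mul]
    have z2 : (v 0 * v 4) * v 2 = 0 := by rw [assoc3, h02, zero_mul]
    have z3 : (v 0 * v 4) * v 3 = 0 := by rw [assoc3, h03, zero_mul]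
    rcases hexh (v 0 * v 4) with h|h|h|h|h|h
    · exact absurd h n04
    · exact h
    · rw [h] at z3; exact absurd z3 n13
    · rw [h] at z3; exact absurd z3 n23
    · rw [h, mul_comm] at z1; exact absurd z1 n13
    · rw [h, mul_comm] at z2; exact absurd z2 n24
  -- p23 : v2 * v3 = v1
  have p23 : v 2 * v 3 = v 1 := by
    have z0 : (v 2 * v 3) * v 0 = 0 := by
      rw [assoc3, mul_comm (v 2) (v 0), h02, zero_mul]
    have z1 : (v 2 * v 3) * v 1 = 0 := by
      rw [assoc3, mul_comm (v 2) (v 1), h12, zero_mul]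
    have z4 : (v 2 * v 3) * v 4 = 0 := by rw [mul_assoc, h34, mul_zero]
    rcases hexh (v 2 * v 3) with h|h|h|h|h|h
    · exact absurd h n23
    · rw [h] at z4; exact absurd z4 n04
    · exact h
    · rw [h] at z4; exact absurd z4 n24
    · rw [h, mul_comm] at z1; exact absurd z1 n13
    · rw [h, mul_comm] at z0; exact absurd z0 n04
  -- p24 : v2 * v4 = v0
  have p24 : v 2 * v 4 = v 0 := by
    have z0 : (v 2 * v 4) * v 0 = 0 := by
      rw [assoc3, mul_comm (v 2) (v 0), h02, zero_mul]
    have z1 : (v 2 * v 4) * v 1 = 0 := by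
      rw [assoc3, mul_comm (v 2) (v 1), h12, zero_mul]
    have z3 : (v 2 * v 4) * v 3 = 0 := by
      rw [mul_assoc, mul_comm (v 4) (v 3), h34, mul_zero]
    rcases hexh (v 2 * v 4) with h|h|h|h|h|h
    · exact absurd h n24
    · exact h
    · rw [h] at z3; exact absurd z3 n13
    · rw [h] at z3; exact absurd z3 n23
    · rw [h, mul_comm] at z1; exact absurd z1 n13
    · rw [h, mul_comm] at z0; exact absurd z0 n04
  -- squares
  have sq0 : v 0 * v 0 = 0 := by
    have h : v 0 * (v 2 * v 4) = 0 := by rw [← mul_assoc, h02, zero_mul]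
    rwa [p24] at h
  have sq1 : v 1 * v 1 = 0 := by
    have h : v 1 * (v 2 * v 3) = 0 := by
      rw [← mul_assoc, h12, zero_mul]
    rwa [p23] at h
  have sq2 : v 2 * v 2 = 0 := by
    have z0 : (v 2 * v 2) * v 0 = 0 := by
      rw [assoc3, mul_comm (v 2) (v 0), h02, zero_mul]
    have z1 : (v 2 * v 2) * v 1 = 0 := by
      rw [assoc3, mul_comm (v 2) (v 1), h12, zero_mul]
    have z3 : (v 2 * v 2) * v 3 = 0 := by
      rw [mul_assoc, p23, mul_comm (v 2) (v 1), h12]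
    have z4 : (v 2 * v 2) * v 4 = 0 := by rw [mul_assoc, p24, mul_comm (v 2) (v 0), h02]
    rcases hexh (v 2 * v 2) with h|h|h|h|h|h
    · exact h
    · rw [h] at z4; exact absurd z4 n04
    · rw [h] at z3; exact absurd z3 n13
    · rw [h] at z3; exact absurd z3 n23
    · rw [h, mul_comm] at z1; exact absurd z1 n13
    · rw [h, mul_comm] at z0; exact absurd z0 n04
  have sq3 : v 3 * v 3 = v 3 := by
    have k : (v 3 * v 3) * v 1 = v 1 := by
      rw [mul_assoc, mul_comm (v 3) (v 1), p13, mul_comm (v 3) (v 1), p13]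
    rcases hexh (v 3 * v 3) with h|h|h|h|h|h
    · rw [h, zero_mul] at k; exact absurd k.symm (hne 1)
    · rw [h, h01] at k; exact absurd k.symm (hne 1)
    · rw [h, sq1] at k; exact absurd k.symm (hne 1)
    · rw [h, mul_comm, h12] at k; exact absurd k.symm (hne 1)
    · exact h
    · rw [h, mul_comm, h14] at k; exact absurd k.symm (hne 1)
  have sq4 : v 4 * v 4 = v 4 := by
    have k : (v 4 * v 4) * v 0 = v 0 := by
      rw [mul_assoc, mul_comm (v 4) (v 0), p04, mul_comm (v 4) (v 0), p04]
    rcases hexh (v 4 * v 4) with h|h|h|h|h|h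
    · rw [h, zero_mul] at k; exact absurd k.symm (hne 0)
    · rw [h, sq0] at k; exact absurd k.symm (hne 0)
    · rw [h, mul_comm, h01] at k; exact absurd k.symm (hne 0)
    · rw [h, mul_comm, h02] at k; exact absurd k.symm (hne 0)
    · rw [h, mul_comm, h03] at k; exact absurd k.symm (hne 0)
    · exact h
  -- commuted versions
  have c10 : v 1 * v 0 = 0 := by rw [mul_comm]; exact h01
  have c20 : v 2 * v 0 = 0 := by rw [mul_comm]; exact h02
  have c21 : v 2 * v 1 = 0 := by rw [mul_comm]; exact h12
  have c30 : v 3 * v 0 = 0 := by rw [mul_comm]; exact h03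
  have c41 : v 4 * v 1 = 0 := by rw [mul_comm]; exact h14
  have c43 : v 4 * v 3 = 0 := by rw [mul_comm]; exact h34
  have c31 : v 3 * v 1 = v 1 := by rw [mul_comm]; exact p13
  have c40 : v 4 * v 0 = v 0 := by rw [mul_comm]; exact p04
  have c32 : v 3 * v 2 = v 1 := by rw [mul_comm]; exact p23
  have c42 : v 4 * v 2 = v 0 := by rw [mul_comm]; exact p24
  -- the bijection
  set f : S6 → T := fun s => match s with
    | zero => 0 | a1 => v 0 | a2 => v 1 | a3 => v 2 | x1 => v 3 | x2 => v 4 with hf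
  have hbij : Function.Bijective f := by
    constructor
    · intro s s' h
      cases s <;> cases s' <;> simp only [hf] at h <;>
        first
          | rfl
          | exact absurd h.symm (hne _)
          | exact absurd h (hne _)
          | exact absurd h (hd _ _ (by decide))
    · intro t
      rcases hexh t with rfl|rfl|rfl|rfl|rfl|rfl
      exacts [⟨zero, rfl⟩, ⟨a1, rfl⟩, ⟨a2, rfl⟩, ⟨a3, rfl⟩, ⟨x1, rfl⟩, ⟨x2, rfl⟩]
  set e : T ≃ S6 := (Equiv.ofBijective f hbij).symm with he
  have E : ∀ s : S6, e (f s) = s := fun s => Equiv.symm_apply_apply _ s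
  have EZ : e 0 = zero := E zero
  have E0 : e (v 0) = a1 := E a1
  have E1 : e (v 1) = a2 := E a2
  have E2 : e (v 2) = a3 := E a3
  have E3 : e (v 3) = x1 := E x1
  have E4 : e (v 4) = x2 := E x2
  refine ⟨e, EZ, ?_⟩
  intro s t
  rcases hexh s with rfl|rfl|rfl|rfl|rfl|rfl <;>
    rcases hexh t with rfl|rfl|rfl|rfl|rfl|rfl <;>
      simp only [zero_mul, mul_zero, sq0, sq1, sq2, sq3, sq4, h01, h02, h12, h03, h14, h34,
        c10, c20, c21, c30, c41, c43, p13, p04, p23, p24, c31, c40, c32, c42,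
        EZ, E0, E1, E2, E3, E4] <;> rfl

/-- **Corollary 2.4.** The graph G13 has a unique corresponding commutative
zero-divisor semigroup: `mul13` is an associative, commutative multiplication on
{0, a₁, a₂, a₃, x₁, x₂} with absorbing zero making it a zero-divisor semigroup,
its zero-divisor graph is the graph G13, and every commutative zero-divisor
semigroup T with Γ(T) ≅ G13 is isomorphic to it. -/
theorem G13_unique_semigroup :
    (∀ a b c : S6, mul13 (mul13 a b) c = mul13 a (mul13 b c)) ∧
    (∀ a b : S6, mul13 a b = mul13 b a) ∧
    (∀ a : S6, mul13 zero a = zero) ∧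
    (∀ a : S6, ∃ t : S6, t ≠ zero ∧ mul13 a t = zero) ∧
    (∀ u v : S6, u ≠ zero → v ≠ zero → u ≠ v →
      (mul13 u v = zero ↔
        ({u, v} : Set S6) = {a1, a2} ∨ ({u, v} : Set S6) = {a1, a3} ∨
        ({u, v} : Set S6) = {a2, a3} ∨ ({u, v} : Set S6) = {a1, x1} ∨
        ({u, v} : Set S6) = {a2, x2} ∨ ({u, v} : Set S6) = {x1, x2})) ∧
    (∀ (T : Type) [CommSemigroupWithZero T], IsZeroDivisorSemigroup T →
      Nonempty (zdGraph T ≃g G13) →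
      ∃ e : T ≃ S6, e 0 = zero ∧ ∀ s t : T, e (s * t) = mul13 (e s) (e t)) := by
  refine ⟨by decide, by decide, by decide, by decide, ?_, ?_⟩
  · intro u v hu hv huv
    simp only [Set.pair_eq_pair_iff]
    revert u v hu hv huv
    decide
  · intro T _ hzd ⟨φ⟩
    exact G13_uniq T hzd φ
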